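/- The largest modulus of a complex root of the polynomial (X-1)^4 (X+1)^2 (X^2 - X + 1)(X^2 + X + 1)^3 (X^2 - 3X + 1) equals (3 + sqrt 5)/2. -/

import Mathlib

open Polynomial

/-- The largest modulus of a complex root of the polynomial
`(X-1)^4 (X+1)^2 (X^2 - X + 1)(X^2 + X + 1)^3 (X^2 - 3X + 1)` equals `(3 + sqrt 5)/2`. -/
theorem stmt3 :
    IsGreatest
      {r : ℝ | ∃ z : ℂ,
        ((X - 1) ^ 4 * (X + 1) ^ 2 * (X ^ 2 - X + 1) * (X ^ 2 + X + 1) ^ 3 *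
          (X ^ 2 - C (3 : ℂ) * X + 1) : Polynomial ℂ).IsRoot z ∧ ‖z‖ = r}
      ((3 + Real.sqrt 5) / 2) := by
  have hs : Real.sqrt 5 ^ 2 = 5 := Real.sq_sqrt (by norm_num)
  have hs0 : (0:ℝ) ≤ Real.sqrt 5 := Real.sqrt_nonneg 5
  have hs3 : Real.sqrt 5 ≤ 3 := by nlinarith
  have hsC : ((Real.sqrt 5 : ℂ))^2 = 5 := by
    rw [← Complex.ofReal_pow, hs]; norm_num
  constructor
  · refine ⟨(((3 + Real.sqrt 5)/2 : ℝ) : ℂ), ?_, ?_⟩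
    · simp only [IsRoot, eval_mul, eval_pow, eval_add, eval_sub, eval_one, eval_X, eval_C]
      have : (((3 + Real.sqrt 5)/2 : ℝ) : ℂ)^2 - 3 * (((3 + Real.sqrt 5)/2 : ℝ) : ℂ) + 1 = 0 := by
        push_cast
        linear_combination (1/4 : ℂ) * hsC
      rw [this]; ring
    · rw [Complex.norm_real, Real.norm_of_nonneg (by linarith)]
  · rintro r ⟨z, hz, rfl⟩
    simp only [IsRoot, eval_mul, eval_pow, eval_add, eval_sub, eval_one, eval_X, eval_C] at hz
    have h1 : (1:ℝ) ≤ (3 + Real.sqrt 5)/2 := by linarith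
    have cube : ∀ w : ℂ, ‖w‖ ^ 3 = 1 → ‖w‖ ≤ (3 + Real.sqrt 5)/2 := by
      intro w hw
      have h0 : (0:ℝ) ≤ ‖w‖ := norm_nonneg w
      nlinarith [sq_nonneg (‖w‖ - 1), sq_nonneg (‖w‖ + 1)]
    rcases mul_eq_zero.mp hz with h | h
    · rcases mul_eq_zero.mp h with h | h
      · rcases mul_eq_zero.mp h with h | h
        · rcases mul_eq_zero.mp h with h | h
          · have : z = 1 := by
              have := pow_eq_zero_iff (n := 4) (by norm_num) |>.mp h
              linear_combination this
            rw [this]; simpa using h1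
          · have : z = -1 := by
              have := pow_eq_zero_iff (n := 2) (by norm_num) |>.mp h
              linear_combination this
            rw [this]; simpa using h1
        · -- z^2 - z + 1 = 0, so z^3 = -1
          have h3 : z ^ 3 = -1 := by linear_combination (z + 1) * h
          apply cube
          have : ‖z ^ 3‖ = 1 := by rw [h3]; simp
          rwa [norm_pow] at this
      · -- (z^2 + z + 1)^3 = 0
        have h' : z ^ 2 + z + 1 = 0 := pow_eq_zero_iff (n := 3) (by norm_num) |>.mp h
        have h3 : z ^ 3 = 1 := by linear_combination (z - 1) * h'
        apply cube
        have : ‖z ^ 3‖ = 1 := by rw [h3]; simp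
        rwa [norm_pow] at this
    · -- z^2 - 3z + 1 = 0
      have hfac : (z - (((3 + Real.sqrt 5)/2 : ℝ) : ℂ)) * (z - (((3 - Real.sqrt 5)/2 : ℝ) : ℂ)) = 0 := by
        push_cast
        linear_combination h - (1/4 : ℂ) * hsC
      rcases mul_eq_zero.mp hfac with h' | h'
      · have : z = (((3 + Real.sqrt 5)/2 : ℝ) : ℂ) := by linear_combination h'
        rw [this, Complex.norm_real, Real.norm_of_nonneg (by linarith)]
      · have : z = (((3 - Real.sqrt 5)/2 : ℝ) : ℂ) := by linear_combination h'
        rw [this, Complex.norm_real, Real.norm_of_nonneg (by linarith)]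
        linarith
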